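/- Reliability of the DT-LTT selection rule: let λ_1,...,λ_m be a fixed sequence of hyperparameters with true expected losses L(λ_j) ∈ [0,1] and empirical losses \hat{L}(λ_j) computed from n i.i.d. samples in [0,1] (\hat{L}(λ_j) has mean L(λ_j)). Define j^stop as the first index j with \hat{L}(λ_j) > ψ(α,δ) = α − sqrt(−ln(δ)/(2n)) (or m if none), and suppose \hat{L}(λ_1) ≤ ψ(α,δ), and let λ* be any λ_{j*} with j* ≤ j^stop chosen so that \hat{L}(λ_{j*}) ≤ ψ(α,δ). Then Pr[L(λ*) ≤ α] ≥ 1 − δ. -/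

import Mathlib

open MeasureTheory ProbabilityTheory

/-- Scalar core of Hoeffding's lemma. -/
lemma hoeffding_scalar {p : ℝ} (hp0 : 0 ≤ p) (hp1 : p ≤ 1) (s : ℝ) (hs : s ≤ 0) :
    1 - p + p * Real.exp s ≤ Real.exp (p * s + s ^ 2 / 8) := by
  set d : ℝ → ℝ := fun x => 1 - p + p * Real.exp x with hd
  have hdpos : ∀ x, 0 < d x := by
    intro x
    rcases eq_or_lt_of_le hp1 with h | h
    · simp [hd, ← h]; positivity
    · have : 0 ≤ p * Real.exp x := by positivity
      simp only [hd]; linarith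
  set h : ℝ → ℝ := fun x => p * x + x ^ 2 / 8 - Real.log (d x) with hh
  set h1 : ℝ → ℝ := fun x => p + x / 4 - p * Real.exp x / d x with hh1
  set h2 : ℝ → ℝ := fun x => 1 / 4 - p * Real.exp x * (1 - p) / (d x) ^ 2 with hh2
  have hdD : ∀ x, HasDerivAt d (p * Real.exp x) x := by
    intro x
    exact ((Real.hasDerivAt_exp x).const_mul p).const_add (1 - p)
  have hhD : ∀ x, HasDerivAt h (h1 x) x := by
    intro x
    have hlog : HasDerivAt (fun x => Real.log (d x)) (p * Real.exp x / d x) x :=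
      (hdD x).log (hdpos x).ne'
    have hpoly : HasDerivAt (fun x : ℝ => p * x + x ^ 2 / 8) (p + 2 * x / 8) x := by
      have := ((hasDerivAt_pow 2 x).div_const 8).const_add 0
      have h2' : HasDerivAt (fun x : ℝ => p * x) p x := by
        simpa using (hasDerivAt_id x).const_mul p
      exact (h2'.add ((hasDerivAt_pow 2 x).div_const 8)).congr_deriv (by norm_num)
    have := hpoly.sub hlog
    refine this.congr_deriv (Eq.symm ?_)
    simp only [hh1]
    ring
  have hh1D : ∀ x, HasDerivAt h1 (h2 x) x := by
    intro x
    have hq : HasDerivAt (fun x => p * Real.exp x / d x)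
        ((p * Real.exp x * d x - p * Real.exp x * (p * Real.exp x)) / (d x) ^ 2) x :=
      ((Real.hasDerivAt_exp x).const_mul p).div (hdD x) (hdpos x).ne'
    have hpoly : HasDerivAt (fun x : ℝ => p + x / 4) (1 / 4) x := by
      simpa using ((hasDerivAt_id x).div_const 4).const_add p
    have := hpoly.sub hq
    refine this.congr_deriv (Eq.symm ?_)
    simp only [hh2, hd]
    field_simp
    ring
  have hh2nonneg : ∀ x, 0 ≤ h2 x := by
    intro x
    clear_value d h h1 h2
    have hd2 : 4 * (p * Real.exp x * (1 - p)) ≤ (d x) ^ 2 := by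
      have := sq_nonneg ((1 - p) - p * Real.exp x)
      simp only [hd]; nlinarith
    have hdx := hdpos x
    have key : p * Real.exp x * (1 - p) / (d x) ^ 2 ≤ 1 / 4 := by
      have hle : p * Real.exp x * (1 - p) ≤ 1 / 4 * (d x) ^ 2 := by linarith
      exact (div_le_iff₀ (by positivity)).mpr hle
    simp only [hh2]
    linarith [key]
  have hmono : Monotone h1 := by
    refine monotone_of_deriv_nonneg (fun x => (hh1D x).differentiableAt) ?_
    intro x; rw [(hh1D x).deriv]; exact hh2nonneg x
  have h1zero : h1 0 = 0 := by
    simp only [hh1, hd, Real.exp_zero, mul_one]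
    field_simp
    ring
  have hanti : AntitoneOn h (Set.Iic (0:ℝ)) := by
    refine antitoneOn_of_deriv_nonpos (convex_Iic 0)
      (fun x _ => (hhD x).differentiableAt.continuousAt.continuousWithinAt)
      (fun x _ => (hhD x).differentiableAt.differentiableWithinAt) ?_
    intro x hx
    rw [(hhD x).deriv]
    have : x ≤ 0 := le_of_lt (by simpa using hx)
    calc h1 x ≤ h1 0 := hmono this
    _ = 0 := h1zero
  have hzero : h 0 = 0 := by simp [hh, hd]
  have : h 0 ≤ h s := hanti (by simp [hs]) (by simp) hs
  rw [hzero] at this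
  have hlog : Real.log (d s) ≤ p * s + s ^ 2 / 8 := by
    simp only [hh] at this; linarith
  calc 1 - p + p * Real.exp s = d s := rfl
  _ ≤ Real.exp (p * s + s ^ 2 / 8) := by
      rw [← Real.exp_log (hdpos s)]; exact Real.exp_le_exp.mpr hlog

lemma integrable_exp_mul_of_bounded {Ω : Type*} [MeasurableSpace Ω] {μ : Measure Ω}
    [IsProbabilityMeasure μ] {X : Ω → ℝ} (hX : Measurable X)
    (hb : ∀ ω, X ω ∈ Set.Icc (0:ℝ) 1) (t : ℝ) :
    Integrable (fun ω => Real.exp (t * X ω)) μ := by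
  refine Integrable.mono' (integrable_const (Real.exp |t|)) 
    ((hX.const_mul t).exp).aestronglyMeasurable (ae_of_all _ fun ω => ?_)
  rw [Real.norm_eq_abs, abs_of_pos (Real.exp_pos _)]
  apply Real.exp_le_exp.mpr
  have h := hb ω
  rcases le_or_gt t 0 with ht | ht
  · calc t * X ω ≤ 0 := mul_nonpos_of_nonpos_of_nonneg ht h.1
    _ ≤ |t| := abs_nonneg t
  · calc t * X ω ≤ t * 1 := by nlinarith [h.2]
    _ ≤ |t| := by rw [mul_one]; exact le_abs_self t

/-- Hoeffding's lemma for `[0,1]`-valued random variables, lower-tail version. -/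
lemma mgf_le_hoeffding {Ω : Type*} [MeasurableSpace Ω] {μ : Measure Ω}
    [IsProbabilityMeasure μ] {X : Ω → ℝ} (hX : Measurable X)
    (hb : ∀ ω, X ω ∈ Set.Icc (0:ℝ) 1) {p : ℝ} (hmean : ∫ ω, X ω ∂μ = p)
    {s : ℝ} (hs : s ≤ 0) :
    mgf X μ s ≤ Real.exp (p * s + s ^ 2 / 8) := by
  have hintX : Integrable X μ := by
    refine Integrable.mono' (integrable_const 1) hX.aestronglyMeasurable
      (ae_of_all _ fun ω => ?_)
    rw [Real.norm_eq_abs, abs_of_nonneg (hb ω).1]; exact (hb ω).2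
  have hp0 : 0 ≤ p := by
    rw [← hmean]; exact integral_nonneg fun ω => (hb ω).1
  have hp1 : p ≤ 1 := by
    rw [← hmean]
    calc ∫ ω, X ω ∂μ ≤ ∫ _, (1:ℝ) ∂μ := integral_mono hintX (integrable_const 1)
          (fun ω => (hb ω).2)
    _ = 1 := by simp
  have key : ∀ ω, Real.exp (s * X ω) ≤ (1 - X ω) + X ω * Real.exp s := by
    intro ω
    have h := hb ω
    have := convexOn_exp.2 (Set.mem_univ (0:ℝ)) (Set.mem_univ s)
      (by linarith [h.2] : (0:ℝ) ≤ 1 - X ω) h.1 (by ring)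
    simpa [mul_comm] using this
  calc mgf X μ s = ∫ ω, Real.exp (s * X ω) ∂μ := rfl
  _ ≤ ∫ ω, ((1 - X ω) + X ω * Real.exp s) ∂μ := by
      refine integral_mono (integrable_exp_mul_of_bounded hX hb s) ?_ key
      exact ((integrable_const (1:ℝ)).sub hintX).add (hintX.mul_const _)
  _ = 1 - p + p * Real.exp s := by
      have h1 : Integrable (fun ω => 1 - X ω) μ := (integrable_const (1:ℝ)).sub hintX
      have h2 : Integrable (fun ω => X ω * Real.exp s) μ := hintX.mul_const _
      rw [integral_add h1 h2, integral_sub (integrable_const (1:ℝ)) hintX,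
        integral_mul_const, hmean]
      simp
  _ ≤ Real.exp (p * s + s ^ 2 / 8) := hoeffding_scalar hp0 hp1 s hs

/-- Hoeffding inequality, lower tail, for i.i.d.-mean `[0,1]`-valued variables. -/
lemma hoeffding_tail {Ω : Type*} [MeasurableSpace Ω] {μ : Measure Ω}
    [IsProbabilityMeasure μ] {n : ℕ} (hn : 0 < n) {X : Fin n → Ω → ℝ}
    (hX : ∀ i, Measurable (X i)) (hb : ∀ i ω, X i ω ∈ Set.Icc (0:ℝ) 1)
    (hindep : iIndepFun X μ)
    {p : ℝ} (hmean : ∀ i, ∫ ω, X i ω ∂μ = p) {u : ℝ} (hu : 0 < u) :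
    (μ {ω | (∑ i, X i ω) ≤ n * (p - u)}).toReal ≤ Real.exp (-2 * n * u ^ 2) := by
  have hint : ∀ i ∈ Finset.univ, Integrable (fun ω => Real.exp (-4 * u * X i ω)) μ :=
    fun i _ => integrable_exp_mul_of_bounded (hX i) (hb i) _
  have hs : (-4 * u : ℝ) ≤ 0 := by linarith
  have hchern := measure_le_le_exp_mul_mgf (μ := μ) (X := ∑ i, X i) (n * (p - u)) hs
    (by simpa using hindep.integrable_exp_mul_sum hX hint)
  have hmgf : mgf (∑ i, X i) μ (-4 * u) ≤ Real.exp (n * (p * (-4 * u) + (-4 * u) ^ 2 / 8)) := by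
    rw [hindep.mgf_sum hX]
    calc ∏ i : Fin n, mgf (X i) μ (-4 * u)
        ≤ ∏ _i : Fin n, Real.exp (p * (-4 * u) + (-4 * u) ^ 2 / 8) :=
          Finset.prod_le_prod (fun i _ => mgf_nonneg)
            (fun i _ => mgf_le_hoeffding (hX i) (hb i) (hmean i) hs)
    _ = Real.exp (n * (p * (-4 * u) + (-4 * u) ^ 2 / 8)) := by
          rw [Finset.prod_const, ← Real.exp_nat_mul]
          simp [Finset.card_univ]
  have hset : {ω | (∑ i, X i ω) ≤ n * (p - u)} = {ω | (∑ i, X i) ω ≤ n * (p - u)} := by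
    ext ω; simp [Finset.sum_apply]
  rw [hset]
  calc (μ {ω | (∑ i, X i) ω ≤ n * (p - u)}).toReal
      ≤ Real.exp (-(-4 * u) * (n * (p - u))) * mgf (∑ i, X i) μ (-4 * u) := hchern
  _ ≤ Real.exp (-(-4 * u) * (n * (p - u))) * Real.exp (n * (p * (-4 * u) + (-4 * u) ^ 2 / 8)) := by
      exact mul_le_mul_of_nonneg_left hmgf (Real.exp_pos _).le
  _ = Real.exp (-2 * n * u ^ 2) := by
      rw [← Real.exp_add]; congr 1; ring


/-- Reliability of the DT-LTT selection rule (Theorem 1 of the paper): for a fixed sequence of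
candidate hyperparameters with per-sample losses i.i.d. across calibration samples, if the
selected index `jstar ω` is accepted (empirical loss at most `ψ(α,δ)`) and every earlier index
in the tested sequence is also accepted, then the true expected loss of the selection is at most
`α` with probability at least `1 - δ`. -/
theorem dt_ltt_reliability
    {Ω : Type*} [MeasurableSpace Ω] (μ : Measure Ω) [IsProbabilityMeasure μ]
    (m n : ℕ) (hm : 0 < m) (hn : 0 < n)
    (ℓ : Fin m → Fin n → Ω → ℝ)
    (hmeas : ∀ j i, Measurable (ℓ j i))
    (hbound : ∀ j i ω, ℓ j i ω ∈ Set.Icc (0 : ℝ) 1)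
    -- the per-sample loss vectors are i.i.d. across the `n` calibration samples
    (hindep : iIndepFun
      (fun (i : Fin n) (ω : Ω) (j : Fin m) => ℓ j i ω) μ)
    (hid : ∀ i : Fin n,
      Measure.map (fun (ω : Ω) (j : Fin m) => ℓ j i ω) μ =
        Measure.map (fun (ω : Ω) (j : Fin m) => ℓ j ⟨0, hn⟩ ω) μ)
    (L : Fin m → ℝ) (hL : ∀ j, L j ∈ Set.Icc (0 : ℝ) 1)
    (hmean : ∀ j i, (∫ ω, ℓ j i ω ∂μ) = L j)
    (α δ : ℝ) (hα : α ∈ Set.Icc (0 : ℝ) 1) (hδ : δ ∈ Set.Ioo (0 : ℝ) 1)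
    (Lhat : Fin m → Ω → ℝ)
    (hLhat : ∀ j ω, Lhat j ω = (∑ i, ℓ j i ω) / n)
    (ψ : ℝ) (hψ : ψ = α - Real.sqrt (-Real.log δ / (2 * n)))
    (jstar : Ω → Fin m)
    -- the first candidate is accepted
    (hfirst : ∀ ω, Lhat ⟨0, hm⟩ ω ≤ ψ)
    -- the selected candidate is accepted
    (hacc : ∀ ω, Lhat (jstar ω) ω ≤ ψ)
    -- the selected index does not exceed the stopping index: all earlier candidates accepted
    (hbefore : ∀ ω, ∀ j : Fin m, j < jstar ω → Lhat j ω ≤ ψ) :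
    1 - δ ≤ (μ {ω | L (jstar ω) ≤ α}).toReal := by
  by_cases hall : ∀ j, L j ≤ α
  · have : {ω | L (jstar ω) ≤ α} = Set.univ := Set.eq_univ_of_forall fun ω => hall _
    rw [this, measure_univ, ENNReal.toReal_one]
    linarith [hδ.1]
  push_neg at hall
  -- the least index whose true loss exceeds α
  set S : Finset (Fin m) := Finset.univ.filter (fun j => α < L j) with hS
  have hSne : S.Nonempty := by
    obtain ⟨j, hj⟩ := hall
    exact ⟨j, by simp [hS, hj]⟩
  set j0 : Fin m := S.min' hSne with hj0def
  have hj0S : j0 ∈ S := S.min'_mem hSne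
  have hj0 : α < L j0 := by simpa [hS] using hj0S
  have hj0min : ∀ j, α < L j → j0 ≤ j := fun j hj => S.min'_le j (by simp [hS, hj])
  -- the deviation
  set u : ℝ := Real.sqrt (-Real.log δ / (2 * n)) with hu_def
  have hlogδ : Real.log δ < 0 := Real.log_neg hδ.1 hδ.2
  have hq : (0:ℝ) < -Real.log δ / (2 * n) := div_pos (by linarith) (by positivity)
  have hu : 0 < u := Real.sqrt_pos.mpr hq
  have hu2 : u ^ 2 = -Real.log δ / (2 * n) := Real.sq_sqrt hq.le
  have hnpos : (0:ℝ) < (n:ℝ) := Nat.cast_pos.mpr hn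
  -- the bad event
  set B : Set Ω := {ω | (∑ i, ℓ j0 i ω) ≤ n * (L j0 - u)} with hB
  have hsub : {ω | α < L (jstar ω)} ⊆ B := by
    intro ω hω
    have hj0le : j0 ≤ jstar ω := hj0min _ hω
    have hLhatψ : Lhat j0 ω ≤ ψ := by
      rcases eq_or_lt_of_le hj0le with h | h
      · rw [h]; exact hacc ω
      · exact hbefore ω j0 h
    rw [hLhat] at hLhatψ
    have hsum : (∑ i, ℓ j0 i ω) ≤ n * (α - u) := by
      rw [div_le_iff₀ hnpos] at hLhatψ
      calc (∑ i, ℓ j0 i ω) ≤ ψ * n := hLhatψ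
      _ = n * (α - u) := by rw [hψ]; ring
    have : (n:ℝ) * (α - u) ≤ n * (L j0 - u) := by nlinarith
    exact le_trans hsum this
  -- Hoeffding bound on the bad event
  have hindep' : iIndepFun (fun i => ℓ j0 i) μ := by
    have := hindep.comp (fun i (v : Fin m → ℝ) => v j0) (fun i => measurable_pi_apply j0)
    exact this
  have hhoef := hoeffding_tail hn (fun i => hmeas j0 i) (fun i ω => hbound j0 i ω)
    hindep' (fun i => hmean j0 i) hu
  have hδbound : (μ B).toReal ≤ δ := by
    refine le_trans hhoef ?_
    have : -2 * (n:ℝ) * u ^ 2 = Real.log δ := by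
      rw [hu2]; field_simp
    rw [this, Real.exp_log hδ.1]
  -- conclude
  have hBmeas : MeasurableSet B := by
    apply measurableSet_le (Finset.measurable_sum _ fun i _ => hmeas j0 i) measurable_const
  have hcompl : Bᶜ ⊆ {ω | L (jstar ω) ≤ α} := by
    intro ω hω
    by_contra hcon
    have : α < L (jstar ω) := not_le.mp hcon
    exact hω (hsub this)
  have h1 : (μ Bᶜ).toReal ≤ (μ {ω | L (jstar ω) ≤ α}).toReal :=
    ENNReal.toReal_mono (measure_ne_top _ _) (measure_mono hcompl)
  have h2 : (μ Bᶜ).toReal = 1 - (μ B).toReal := by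
    rw [measure_compl hBmeas (measure_ne_top _ _), measure_univ,
      ENNReal.toReal_sub_of_le prob_le_one ENNReal.one_ne_top, ENNReal.toReal_one]
  linarith
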